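/- Let X be a random variable with a Borel probability distribution μ supported in (0,∞), with mean E_μ[X] = λ and variance Var_μ(X) = σ² > 0. Then: (i) for every s > 0, E_μ[e^{sX}] ≥ (σ² + λ²·e^{(λ²+σ²)s/λ}) / (σ² + λ²); and (ii) for every s < 0, e^{λs} ≤ E_μ[e^{sX}] ≤ (σ² + λ²·e^{(λ²+σ²)s/λ}) / (σ² + λ²). -/

import Mathlib

open MeasureTheory Set Filter Topology
open scoped BigOperators ENNReal

noncomputable section

/-- The support of a measure: points all of whose open neighborhoods have
positive measure. -/
def msupport {E : Type*} [TopologicalSpace E] [MeasurableSpace E]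
    (μ : Measure E) : Set E :=
  {x | ∀ U : Set E, IsOpen U → x ∈ U → μ U ≠ 0}

lemma key_ident (c u : ℝ) (hc : c ≠ 0) (hu : u ≠ 0) :
    Real.exp (c*u) - 1 - (2*(Real.exp c - 1) - c*Real.exp c)*u
      - (c*Real.exp c - (Real.exp c - 1))*u^2
    = c*u * ∫ t in (0:ℝ)..1,
        (Real.exp (c*u*t) - Real.exp (c*t)*(1 + c*t*(u-1))) := by
  have hcu : c*u ≠ 0 := mul_ne_zero hc hu
  set F : ℝ → ℝ := fun t =>
    Real.exp (c*u*t)/(c*u) - Real.exp (c*t)/c - (u-1)*(t*Real.exp (c*t) - Real.exp (c*t)/c)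
    with hF
  have hderiv : ∀ t ∈ Set.uIcc (0:ℝ) 1, HasDerivAt F
      (Real.exp (c*u*t) - Real.exp (c*t)*(1 + c*t*(u-1))) t := by
    intro t _
    have h1 : HasDerivAt (fun t => Real.exp (c*u*t)) (Real.exp (c*u*t) * (c*u)) t :=
      (Real.hasDerivAt_exp (c*u*t)).comp t (by simpa using (hasDerivAt_id t).const_mul (c*u))
    have h2 : HasDerivAt (fun t => Real.exp (c*t)) (Real.exp (c*t) * c) t :=
      (Real.hasDerivAt_exp (c*t)).comp t (by simpa using (hasDerivAt_id t).const_mul c)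
    have h3 : HasDerivAt (fun t => t * Real.exp (c*t))
        (1 * Real.exp (c*t) + t * (Real.exp (c*t) * c)) t :=
      (hasDerivAt_id t).mul h2
    have := ((h1.div_const (c*u)).sub (h2.div_const c)).sub
      (((h3.sub (h2.div_const c))).const_mul (u-1))
    refine this.congr_deriv ?_
    rw [mul_div_cancel_right₀ _ hcu, mul_div_cancel_right₀ _ hc]
    ring
  have hcont : IntervalIntegrable
      (fun t => Real.exp (c*u*t) - Real.exp (c*t)*(1 + c*t*(u-1))) MeasureTheory.volume 0 1 :=
    (Continuous.sub (by continuity) (by continuity)).intervalIntegrable 0 1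
  rw [intervalIntegral.integral_eq_sub_of_hasDerivAt hderiv hcont]
  simp only [hF, mul_zero, Real.exp_zero]
  field_simp
  ring

lemma integrand_nonneg (c u t : ℝ) :
    0 ≤ Real.exp (c*u*t) - Real.exp (c*t)*(1 + c*t*(u-1)) := by
  have h := Real.add_one_le_exp (c*t*(u-1))
  have h2 : Real.exp (c*t)*(1 + c*t*(u-1)) ≤ Real.exp (c*t) * Real.exp (c*t*(u-1)) := by
    have := Real.exp_pos (c*t)
    nlinarith
  rw [← Real.exp_add] at h2
  have : c*t + c*t*(u-1) = c*u*t := by ring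
  rw [this] at h2
  linarith

lemma key_nonneg (c u : ℝ) (hc : c ≠ 0) (hu : u ≠ 0) (hcu : 0 ≤ c*u) :
    1 + (2*(Real.exp c - 1) - c*Real.exp c)*u
      + (c*Real.exp c - (Real.exp c - 1))*u^2 ≤ Real.exp (c*u) := by
  have hI : 0 ≤ ∫ t in (0:ℝ)..1,
      (Real.exp (c*u*t) - Real.exp (c*t)*(1 + c*t*(u-1))) :=
    intervalIntegral.integral_nonneg (by norm_num) (fun t _ => integrand_nonneg c u t)
  have := key_ident c u hc hu
  nlinarith [mul_nonneg hcu hI]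

lemma key_nonpos (c u : ℝ) (hc : c ≠ 0) (hu : u ≠ 0) (hcu : c*u ≤ 0) :
    Real.exp (c*u) ≤ 1 + (2*(Real.exp c - 1) - c*Real.exp c)*u
      + (c*Real.exp c - (Real.exp c - 1))*u^2 := by
  have hI : 0 ≤ ∫ t in (0:ℝ)..1,
      (Real.exp (c*u*t) - Real.exp (c*t)*(1 + c*t*(u-1))) :=
    intervalIntegral.integral_nonneg (by norm_num) (fun t _ => integrand_nonneg c u t)
  have := key_ident c u hc hu
  nlinarith [mul_nonpos_of_nonpos_of_nonneg hcu hI]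

lemma msupport_compl_null (μ : Measure ℝ) : μ (msupport μ)ᶜ = 0 := by
  have h : (msupport μ)ᶜ
      = ⋃ U : {U : Set ℝ // IsOpen U ∧ μ U = 0}, (U : Set ℝ) := by
    ext x
    simp only [msupport, mem_compl_iff, mem_setOf_eq, not_forall, mem_iUnion]
    constructor
    · rintro ⟨U, hU, hx, hμU⟩
      exact ⟨⟨U, hU, not_not.mp hμU⟩, hx⟩
    · rintro ⟨⟨U, hU, hμU⟩, hx⟩
      exact ⟨U, hU, hx, by simp [hμU]⟩
  rw [h]
  obtain ⟨t, ht, htU⟩ := TopologicalSpace.isOpen_iUnion_countable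
    (fun U : {U : Set ℝ // IsOpen U ∧ μ U = 0} => (U : Set ℝ)) (fun U => U.2.1)
  rw [← htU]
  exact (measure_biUnion_null_iff ht).2 fun U _ => U.2.2

lemma ofReal_int_le {f : ℝ → ℝ} (μ : Measure ℝ) (hfi : Integrable f μ) :
    ENNReal.ofReal (∫ x, f x ∂μ) ≤ ∫⁻ x, ENNReal.ofReal (f x) ∂μ := by
  have hg : Integrable (fun x => max (f x) 0) μ := hfi.pos_part
  calc ENNReal.ofReal (∫ x, f x ∂μ)
      ≤ ENNReal.ofReal (∫ x, max (f x) 0 ∂μ) :=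
        ENNReal.ofReal_le_ofReal (integral_mono hfi hg fun x => le_max_left _ _)
    _ = ∫⁻ x, ENNReal.ofReal (max (f x) 0) ∂μ :=
        ofReal_integral_eq_lintegral_ofReal hg (ae_of_all _ fun x => le_max_right _ _)
    _ = ∫⁻ x, ENNReal.ofReal (f x) ∂μ := by
        apply lintegral_congr; intro x
        rcases le_or_gt 0 (f x) with h | h
        · rw [max_eq_left h]
        · rw [max_eq_right h.le, ENNReal.ofReal_zero,
            Eq.comm, ENNReal.ofReal_eq_zero]; exact h.le

lemma quad_facts (μ : Measure ℝ) (hμ : IsProbabilityMeasure μ) (lam σ2 : ℝ)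
    (hσ : 0 < σ2) (hlam : 0 < lam)
    (hmean : Integrable (fun x => x) μ) (hmean' : (∫ x, x ∂μ) = lam)
    (hvar : Integrable (fun x => x ^ 2) μ)
    (hvar' : (∫ x, x ^ 2 ∂μ) - lam ^ 2 = σ2) (s : ℝ) (hs : s ≠ 0) :
    ∃ Q : ℝ → ℝ, Integrable Q μ ∧
      (∫ x, Q x ∂μ) = (σ2 + lam ^ 2 * Real.exp ((lam ^ 2 + σ2) * s / lam)) / (σ2 + lam ^ 2) ∧
      (∀ x : ℝ, 0 < x →
        (0 < s → Q x ≤ Real.exp (s*x)) ∧ (s < 0 → Real.exp (s*x) ≤ Q x)) := by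
  have hlamne : lam ≠ 0 := hlam.ne'
  set b : ℝ := (lam^2 + σ2)/lam with hbdef
  have hb : 0 < b := by positivity
  have hbne : b ≠ 0 := hb.ne'
  set c : ℝ := s * b with hcdef
  have hc : c ≠ 0 := mul_ne_zero hs hbne
  set E : ℝ := Real.exp c with hEdef
  set β : ℝ := (2*(E-1) - c*E)/b with hβdef
  set γ : ℝ := (c*E - (E-1))/b^2 with hγdef
  have hintβ : Integrable (fun x : ℝ => β*x) μ := hmean.const_mul β
  have hintγ : Integrable (fun x : ℝ => γ*x^2) μ := hvar.const_mul γ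
  have hint2 : Integrable (fun x : ℝ => β*x + γ*x^2) μ := hintβ.add hintγ
  refine ⟨fun x => 1 + (β*x + γ*x^2), (integrable_const 1).add hint2, ?_, ?_⟩
  · have hx2 : (∫ x, x^2 ∂μ) = σ2 + lam^2 := by linarith
    rw [integral_add (integrable_const 1) hint2,
      integral_add hintβ hintγ,
      integral_const_mul, integral_const_mul, hmean', hx2, integral_const]
    have hE : Real.exp ((lam^2 + σ2)*s/lam) = E := by
      rw [hEdef, hcdef, hbdef]; ring_nf
    rw [hE]
    simp only [measure_univ, probReal_univ, smul_eq_mul, one_mul, hβdef, hγdef, hbdef]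
    have h1 : σ2 + lam^2 ≠ 0 := by positivity
    field_simp
    ring
  · intro x hx
    have hu : x / b ≠ 0 := (div_pos hx hb).ne'
    have hcu : c * (x/b) = s * x := by
      rw [hcdef]; field_simp
    have hpoly : 1 + (2*(E-1) - c*E)*(x/b) + (c*E - (E-1))*(x/b)^2
        = 1 + (β*x + γ*x^2) := by
      rw [hβdef, hγdef]; field_simp; ring
    constructor
    · intro hspos
      have := key_nonneg c (x/b) hc hu (by rw [hcu]; positivity)
      rw [hcu, ← hEdef, hpoly] at this
      exact this
    · intro hsneg
      have := key_nonpos c (x/b) hc hu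
        (by rw [hcu]; exact (mul_nonpos_of_nonpos_of_nonneg hsneg.le hx.le))
      rw [hcu, ← hEdef, hpoly] at this
      exact this

/-- bounds for the moment generating function of a positive
random variable with given mean and variance. -/
theorem mgf_bounds (μ : Measure ℝ) (hμ : IsProbabilityMeasure μ)
    (hsupp : msupport μ ⊆ Ioi 0) (lam σ2 : ℝ) (hσ : 0 < σ2)
    (hmean : Integrable (fun x => x) μ) (hmean' : (∫ x, x ∂μ) = lam)
    (hvar : Integrable (fun x => x ^ 2) μ)
    (hvar' : (∫ x, x ^ 2 ∂μ) - lam ^ 2 = σ2) :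
    (∀ s : ℝ, 0 < s →
      ENNReal.ofReal ((σ2 + lam ^ 2 * Real.exp ((lam ^ 2 + σ2) * s / lam)) /
          (σ2 + lam ^ 2)) ≤
        ∫⁻ x, ENNReal.ofReal (Real.exp (s * x)) ∂μ) ∧
    (∀ s : ℝ, s < 0 →
      ENNReal.ofReal (Real.exp (lam * s)) ≤
          ∫⁻ x, ENNReal.ofReal (Real.exp (s * x)) ∂μ ∧
      ∫⁻ x, ENNReal.ofReal (Real.exp (s * x)) ∂μ ≤
        ENNReal.ofReal ((σ2 + lam ^ 2 * Real.exp ((lam ^ 2 + σ2) * s / lam)) /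
          (σ2 + lam ^ 2))) := by
  have hae : ∀ᵐ x ∂μ, 0 < x := by
    rw [ae_iff]
    refine measure_mono_null (fun x hx => ?_) (msupport_compl_null μ)
    intro hxs
    exact hx (hsupp hxs)
  have hlam : 0 < lam := by
    rw [← hmean',
      integral_pos_iff_support_of_nonneg_ae (hae.mono fun x hx => hx.le) hmean]
    calc (0:ℝ≥0∞) < 1 := by norm_num
      _ = μ univ := measure_univ.symm
      _ ≤ μ {x : ℝ | 0 < x} + μ {x : ℝ | ¬ 0 < x} := by
          refine le_trans (measure_mono fun x _ => ?_) (measure_union_le _ _)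
          by_cases h : 0 < x
          · exact Or.inl h
          · exact Or.inr h
      _ = μ {x : ℝ | 0 < x} := by rw [ae_iff.mp hae, add_zero]
      _ ≤ μ (Function.support fun x : ℝ => x) :=
          measure_mono fun x hx => ne_of_gt hx
  constructor
  · intro s hs
    obtain ⟨Q, hQi, hQint, hQpt⟩ :=
      quad_facts μ hμ lam σ2 hσ hlam hmean hmean' hvar hvar' s hs.ne'
    calc ENNReal.ofReal ((σ2 + lam ^ 2 * Real.exp ((lam ^ 2 + σ2) * s / lam)) /
          (σ2 + lam ^ 2))
        = ENNReal.ofReal (∫ x, Q x ∂μ) := by rw [hQint]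
      _ ≤ ∫⁻ x, ENNReal.ofReal (Q x) ∂μ := ofReal_int_le μ hQi
      _ ≤ ∫⁻ x, ENNReal.ofReal (Real.exp (s * x)) ∂μ :=
          lintegral_mono_ae (hae.mono fun x hx =>
            ENNReal.ofReal_le_ofReal ((hQpt x hx).1 hs))
  · intro s hs
    constructor
    · set A : ℝ := Real.exp (lam*s) * (1 - s*lam) with hA
      set B : ℝ := Real.exp (lam*s) * s with hB
      have hRint : Integrable (fun x => A + B*x) μ :=
        (integrable_const A).add (hmean.const_mul B)
      have hR : (∫ x, A + B*x ∂μ) = Real.exp (lam*s) := by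
        rw [integral_add (integrable_const A) (hmean.const_mul B),
          integral_const, integral_const_mul, hmean']
        simp only [measure_univ, probReal_univ, smul_eq_mul, one_mul, hA, hB]
        ring
      have htang : ∀ x : ℝ, A + B*x ≤ Real.exp (s*x) := by
        intro x
        have h1 := Real.add_one_le_exp (s*(x-lam))
        have h2 : Real.exp (lam*s) * (1 + s*(x-lam))
            ≤ Real.exp (lam*s) * Real.exp (s*(x-lam)) := by
          have := Real.exp_pos (lam*s)
          nlinarith
        rw [← Real.exp_add] at h2
        have h3 : lam*s + s*(x-lam) = s*x := by ring
        rw [h3] at h2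
        calc A + B*x = Real.exp (lam*s) * (1 + s*(x-lam)) := by rw [hA, hB]; ring
          _ ≤ Real.exp (s*x) := h2
      calc ENNReal.ofReal (Real.exp (lam * s))
          = ENNReal.ofReal (∫ x, A + B*x ∂μ) := by rw [hR]
        _ ≤ ∫⁻ x, ENNReal.ofReal (A + B*x) ∂μ := ofReal_int_le μ hRint
        _ ≤ ∫⁻ x, ENNReal.ofReal (Real.exp (s * x)) ∂μ :=
            lintegral_mono fun x => ENNReal.ofReal_le_ofReal (htang x)
    · obtain ⟨Q, hQi, hQint, hQpt⟩ :=
        quad_facts μ hμ lam σ2 hσ hlam hmean hmean' hvar hvar' s hs.ne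
      have hQnn : 0 ≤ᵐ[μ] Q := hae.mono fun x hx =>
        le_trans (Real.exp_pos _).le ((hQpt x hx).2 hs)
      calc ∫⁻ x, ENNReal.ofReal (Real.exp (s * x)) ∂μ
          ≤ ∫⁻ x, ENNReal.ofReal (Q x) ∂μ :=
            lintegral_mono_ae (hae.mono fun x hx =>
              ENNReal.ofReal_le_ofReal ((hQpt x hx).2 hs))
        _ = ENNReal.ofReal (∫ x, Q x ∂μ) :=
            (ofReal_integral_eq_lintegral_ofReal hQi hQnn).symm
        _ = ENNReal.ofReal ((σ2 + lam ^ 2 * Real.exp ((lam ^ 2 + σ2) * s / lam)) /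
            (σ2 + lam ^ 2)) := by rw [hQint]
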